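/- Let Ω ⊆ ℝ^a and E ⊆ ℝ^b be finite sets, B a real b×a matrix, H_Ω an n×a facet matrix for Ω, and H_E an m×b facet matrix for E. Then there exists a natural number k and a simplicial-cone embedding of (Ω, E, B) with k ontic states if and only if there exists an entrywise nonnegative real m×n matrix σ such that B = H_Eᵀ · σ · H_Ω. -/

import Mathlib

open Matrix

/-- The cone of nonnegative linear combinations of a finite set of vectors. -/
def coneOf {a : ℕ} (Ω : Finset (Fin a → ℝ)) : Set (Fin a → ℝ) :=
  {v | ∃ c : (Fin a → ℝ) → ℝ, (∀ x, 0 ≤ c x) ∧ v = ∑ x ∈ Ω, c x • x}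

/-- `H` is a facet matrix for the cone generated by `Ω`. -/
def IsFacetMatrix {a n : ℕ} (Ω : Finset (Fin a → ℝ)) (H : Matrix (Fin n) (Fin a) ℝ) : Prop :=
  (∀ v : Fin a → ℝ, 0 ≤ H.mulVec v ↔ v ∈ coneOf Ω) ∧
  (∀ w : Fin a → ℝ, (∀ v ∈ coneOf Ω, 0 ≤ w ⬝ᵥ v) →
    ∃ w2 : Fin n → ℝ, 0 ≤ w2 ∧ w = Hᵀ.mulVec w2)

/-- A simplicial-cone embedding of the accessible GPT fragment `(Ω, E, B)`
with `k` ontic states. -/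
def IsSimplicialConeEmbedding {a b k : ℕ} (Ω : Finset (Fin a → ℝ))
    (E : Finset (Fin b → ℝ)) (B : Matrix (Fin b) (Fin a) ℝ)
    (τΩ : Matrix (Fin k) (Fin a) ℝ) (τE : Matrix (Fin k) (Fin b) ℝ) : Prop :=
  (∀ s ∈ Ω, 0 ≤ τΩ.mulVec s) ∧ (∀ e ∈ E, 0 ≤ τE.mulVec e) ∧ B = τEᵀ * τΩ

lemma mem_coneOf {a : ℕ} {Ω : Finset (Fin a → ℝ)} {s : Fin a → ℝ} (hs : s ∈ Ω) :
    s ∈ coneOf Ω := by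
  refine ⟨fun x => if x = s then 1 else 0, fun x => by by_cases h : x = s <;> simp [h], ?_⟩
  simp [ite_smul, hs]

/-- Rows of a matrix nonnegative on the cone give a factorization through H. -/
lemma rows_factor {c a n : ℕ} {Ω : Finset (Fin a → ℝ)} {H : Matrix (Fin n) (Fin a) ℝ}
    (hH : IsFacetMatrix Ω H) (τ : Matrix (Fin c) (Fin a) ℝ)
    (hτ : ∀ s ∈ Ω, 0 ≤ τ.mulVec s) :
    ∃ P : Matrix (Fin c) (Fin n) ℝ, (∀ i j, 0 ≤ P i j) ∧ τ = P * H := by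
  have key : ∀ l : Fin c, ∃ w2 : Fin n → ℝ, 0 ≤ w2 ∧ τ l = Hᵀ.mulVec w2 := by
    intro l
    apply hH.2
    rintro v ⟨cf, hc, rfl⟩
    have hexp : τ l ⬝ᵥ (∑ x ∈ Ω, cf x • x) = ∑ x ∈ Ω, cf x * (τ l ⬝ᵥ x) := by
      simp only [dotProduct, Finset.sum_apply, Pi.smul_apply, smul_eq_mul, Finset.mul_sum]
      rw [Finset.sum_comm]
      exact Finset.sum_congr rfl fun x _ => Finset.sum_congr rfl fun i _ => by ring
    rw [hexp]
    exact Finset.sum_nonneg fun x hx => mul_nonneg (hc x) (hτ x hx l)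
  choose P hP hPτ using key
  refine ⟨fun l => P l, fun i j => hP i j, ?_⟩
  ext l q
  rw [hPτ l]
  simp [Matrix.mulVec, Matrix.mul_apply, dotProduct, transpose_apply, mul_comm]
  show _ = ∑ i, P l i * H i q
  exact Finset.sum_congr rfl fun i _ => mul_comm _ _

theorem simplicial_cone_embedding_iff_lp {a b n m : ℕ}
    (Ω : Finset (Fin a → ℝ)) (E : Finset (Fin b → ℝ))
    (B : Matrix (Fin b) (Fin a) ℝ)
    (HΩ : Matrix (Fin n) (Fin a) ℝ) (HE : Matrix (Fin m) (Fin b) ℝ)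
    (hHΩ : IsFacetMatrix Ω HΩ) (hHE : IsFacetMatrix E HE) :
    (∃ (k : ℕ) (τΩ : Matrix (Fin k) (Fin a) ℝ) (τE : Matrix (Fin k) (Fin b) ℝ),
        IsSimplicialConeEmbedding Ω E B τΩ τE) ↔
    (∃ σ : Matrix (Fin m) (Fin n) ℝ, (∀ i j, 0 ≤ σ i j) ∧ B = HEᵀ * σ * HΩ) := by
  constructor
  · rintro ⟨k, τΩ, τE, hτΩ, hτE, hB⟩
    obtain ⟨P, hP, hPΩ⟩ := rows_factor hHΩ τΩ hτΩ
    obtain ⟨Q, hQ, hQE⟩ := rows_factor hHE τE hτE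
    refine ⟨Qᵀ * P, fun i j => ?_, ?_⟩
    · rw [Matrix.mul_apply]
      exact Finset.sum_nonneg fun l _ => mul_nonneg (hQ l i) (hP l j)
    · rw [hB, hPΩ, hQE, Matrix.transpose_mul]
      simp only [Matrix.mul_assoc]
  · rintro ⟨σ, hσ, hB⟩
    classical
    let e : Fin (m * n) ≃ Fin m × Fin n := finProdFinEquiv.symm
    refine ⟨m * n,
      Matrix.of (fun l q => Real.sqrt (σ (e l).1 (e l).2) * HΩ (e l).2 q),
      Matrix.of (fun l p => Real.sqrt (σ (e l).1 (e l).2) * HE (e l).1 p),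
      ?_, ?_, ?_⟩
    · intro s hs l
      have h := (hHΩ.1 s).2 (mem_coneOf hs) (e l).2
      simp only [Matrix.mulVec, Matrix.of_apply, dotProduct, Pi.zero_apply] at h ⊢
      have : ∑ q, Real.sqrt (σ (e l).1 (e l).2) * HΩ (e l).2 q * s q
          = Real.sqrt (σ (e l).1 (e l).2) * ∑ q, HΩ (e l).2 q * s q := by
        rw [Finset.mul_sum]; exact Finset.sum_congr rfl fun i _ => by ring
      rw [this]
      exact mul_nonneg (Real.sqrt_nonneg _) h
    · intro s hs l
      have h := (hHE.1 s).2 (mem_coneOf hs) (e l).1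
      simp only [Matrix.mulVec, Matrix.of_apply, dotProduct, Pi.zero_apply] at h ⊢
      have : ∑ q, Real.sqrt (σ (e l).1 (e l).2) * HE (e l).1 q * s q
          = Real.sqrt (σ (e l).1 (e l).2) * ∑ q, HE (e l).1 q * s q := by
        rw [Finset.mul_sum]; exact Finset.sum_congr rfl fun i _ => by ring
      rw [this]
      exact mul_nonneg (Real.sqrt_nonneg _) h
    · rw [hB]
      ext p q
      simp only [Matrix.mul_apply, Matrix.transpose_apply, Matrix.of_apply]
      rw [Fintype.sum_equiv e
        (fun l => Real.sqrt (σ (e l).1 (e l).2) * HE (e l).1 p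
          * (Real.sqrt (σ (e l).1 (e l).2) * HΩ (e l).2 q))
        (fun ij : Fin m × Fin n =>
          Real.sqrt (σ ij.1 ij.2) * HE ij.1 p * (Real.sqrt (σ ij.1 ij.2) * HΩ ij.2 q))
        (fun l => rfl)]
      rw [Fintype.sum_prod_type, Finset.sum_comm]
      refine Finset.sum_congr rfl fun j _ => ?_
      rw [Finset.sum_mul]
      refine Finset.sum_congr rfl fun i _ => ?_
      have h2 : Real.sqrt (σ i j) * Real.sqrt (σ i j) = σ i j :=
        Real.mul_self_sqrt (hσ i j)
      calc HE i p * σ i j * HΩ j q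
          = Real.sqrt (σ i j) * Real.sqrt (σ i j) * (HE i p * HΩ j q) := by rw [h2]; ring
        _ = Real.sqrt (σ (i, j).1 (i, j).2) * HE (i, j).1 p
            * (Real.sqrt (σ (i, j).1 (i, j).2) * HΩ (i, j).2 q) := by ring
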